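/- There exists a constant B_p > 0 (one may take B_p = q/(q-1) + 1 where 1/p + 1/q = 1) such that for all h in W_0^{1,p}(0,1)^d with 1 < p < ∞, ‖h'‖_{L^p} ≤ B_p · ‖h'(·) − h(·)/s‖_{L^p}. -/

import Mathlib

open MeasureTheory Set Filter

open scoped ENNReal Topology

section AuxLemmas

variable {α : Type*} [MeasurableSpace α] {μ : Measure α}

/-- From integrability of `‖f‖^p`, deduce `MemLp f (ofReal p)`. -/
lemma aux_memLp {E : Type*} [NormedAddCommGroup E] {f : α → E} {p : ℝ} (hp : 0 < p)
    (hm : AEStronglyMeasurable f μ) (hi : Integrable (fun x => ‖f x‖ ^ p) μ) :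
    MemLp f (ENNReal.ofReal p) μ := by
  have h0 : (ENNReal.ofReal p) ≠ 0 := by
    simp only [ne_eq, ENNReal.ofReal_eq_zero, not_le]; exact hp
  have htop : (ENNReal.ofReal p) ≠ ⊤ := ENNReal.ofReal_ne_top
  rw [← memLp_norm_rpow_iff (q := ENNReal.ofReal p) hm h0 htop,
    ENNReal.div_self h0 htop, memLp_one_iff_integrable, ENNReal.toReal_ofReal hp.le]
  exact hi

/-- `MemLp f p` implies `MemLp (‖f‖^(p-1)) q` for conjugate exponents. -/
lemma aux_memLp_rpow {E : Type*} [NormedAddCommGroup E] {p q : ℝ}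
    (hpq : p.HolderConjugate q) {f : α → E} (hf : MemLp f (ENNReal.ofReal p) μ) :
    MemLp (fun x => ‖f x‖ ^ (p - 1)) (ENNReal.ofReal q) μ := by
  have h0 : ENNReal.ofReal (p - 1) ≠ 0 := by
    simp only [ne_eq, ENNReal.ofReal_eq_zero, not_le]; exact hpq.sub_one_pos
  have := (memLp_norm_rpow_iff (q := ENNReal.ofReal (p - 1)) hf.1 h0
    ENNReal.ofReal_ne_top).2 hf
  rw [ENNReal.toReal_ofReal hpq.sub_one_pos.le] at this
  have hdiv : ENNReal.ofReal p / ENNReal.ofReal (p - 1) = ENNReal.ofReal q := by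
    rw [← ENNReal.ofReal_div_of_pos hpq.sub_one_pos, ← hpq.conjugate_eq]
  rwa [hdiv] at this

/-- Hölder inequality in the form needed here. -/
lemma aux_holder {E F : Type*} [NormedAddCommGroup E] [NormedAddCommGroup F] {p q : ℝ}
    (hpq : p.HolderConjugate q) {f : α → E} {φ : α → F}
    (hf : MemLp f (ENNReal.ofReal p) μ) (hφ : MemLp φ (ENNReal.ofReal p) μ) :
    ∫ x, ‖f x‖ ^ (p - 1) * ‖φ x‖ ∂μ ≤
      (∫ x, ‖f x‖ ^ p ∂μ) ^ (1 / q) * (∫ x, ‖φ x‖ ^ p ∂μ) ^ (1 / p) := by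
  have hmem : MemLp (fun x => ‖f x‖ ^ (p - 1)) (ENNReal.ofReal q) μ :=
    aux_memLp_rpow hpq hf
  have key := integral_mul_norm_le_Lp_mul_Lq (μ := μ) hpq.symm hmem hφ.norm
  have e0 : ∀ x : F, ‖‖x‖‖ = ‖x‖ := fun x => norm_norm x
  have e1 : ∀ x, ‖(‖f x‖ ^ (p - 1))‖ = ‖f x‖ ^ (p - 1) := fun x =>
    Real.norm_of_nonneg (Real.rpow_nonneg (norm_nonneg _) _)
  have hmul : (p - 1) * q = p := by
    have h1 : q = p / (p - 1) := hpq.conjugate_eq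
    rw [h1, mul_div_assoc', mul_comm, mul_div_assoc, div_self hpq.sub_one_ne_zero, mul_one]
  have e2 : ∀ x, (‖f x‖ ^ (p - 1)) ^ q = ‖f x‖ ^ p := fun x => by
    rw [← Real.rpow_mul (norm_nonneg _), hmul]
  simp only [e0, e1, e2] at key
  exact key

/-- Product of conjugate `MemLp` real functions is integrable. -/
lemma aux_int_mul {p q : ℝ} (hpq : p.HolderConjugate q) {f g : α → ℝ}
    (hf : MemLp f (ENNReal.ofReal q) μ) (hg : MemLp g (ENNReal.ofReal p) μ) :
    Integrable (fun x => f x * g x) μ := by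
  have hpqr : (1 : ℝ≥0∞) / 1 = 1 / ENNReal.ofReal q + 1 / ENNReal.ofReal p := by
    have e1 : (1:ℝ≥0∞) / ENNReal.ofReal q = ENNReal.ofReal q⁻¹ := by
      rw [one_div, ← ENNReal.ofReal_inv_of_pos hpq.symm.pos]
    have e2 : (1:ℝ≥0∞) / ENNReal.ofReal p = ENNReal.ofReal p⁻¹ := by
      rw [one_div, ← ENNReal.ofReal_inv_of_pos hpq.pos]
    rw [e1, e2, ← ENNReal.ofReal_add (by simpa using hpq.symm.inv_nonneg)
      (by simpa using hpq.inv_nonneg), add_comm q⁻¹, hpq.inv_add_inv_eq_one]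
    simp
  have := memLp_one_iff_integrable.1 (MemLp.smul (φ := f) (f := g) hg hf (hpqr := ⟨by simpa [one_div] using hpqr.symm⟩))
  exact this

lemma aux_rpow_split {x : ℝ} (hx : 0 ≤ x) {p : ℝ} (hp : p ≠ 0) :
    x ^ p = x ^ (p - 1) * x := by
  have h := Real.rpow_add_one' (y := p - 1) hx (by simpa using hp)
  rw [sub_add_cancel] at h
  exact h

lemma aux_le_one_add {x : ℝ} (hx : 0 ≤ x) {p : ℝ} (hp : 1 ≤ p) : x ≤ 1 + x ^ p := by
  rcases le_total x 1 with hx1 | hx1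
  · have := Real.rpow_nonneg hx p
    linarith
  · calc x = x ^ (1 : ℝ) := (Real.rpow_one x).symm
      _ ≤ x ^ p := Real.rpow_le_rpow_of_exponent_le hx1 hp
      _ ≤ 1 + x ^ p := by linarith

/-- Cancellation step: if `0 ≤ A`, `A ≤ A ^ (1/q) * C`, `0 ≤ C`, conjugate exponents,
then `A ^ (1/p) ≤ C`. -/
lemma aux_cancel {p q A C : ℝ} (hpq : p.HolderConjugate q) (hA : 0 ≤ A) (hC : 0 ≤ C)
    (h : A ≤ A ^ (1 / q) * C) : A ^ (1 / p) ≤ C := by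
  rcases eq_or_lt_of_le hA with hA0 | hA0
  · rw [← hA0, Real.zero_rpow hpq.one_div_ne_zero]
    exact hC
  · have hq0 : (0:ℝ) < A ^ (1 / q) := Real.rpow_pos_of_pos hA0 _
    have hsplit : A = A ^ (1 / p) * A ^ (1 / q) := by
      rw [← Real.rpow_add hA0,
        show 1 / p + 1 / q = 1 by
          rw [one_div, one_div]; exact hpq.inv_add_inv_eq_one,
        Real.rpow_one]
    have h2 : A ^ (1 / p) * A ^ (1 / q) ≤ C * A ^ (1 / q) := by
      rw [← hsplit]; linarith [h]
    exact (mul_le_mul_iff_of_pos_right hq0).1 h2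

end AuxLemmas

set_option maxHeartbeats 1000000 in
/-- There is a constant `B_p = q/(q-1) + 1` (with `1/p + 1/q = 1`) such that
`‖h'‖_{L^p} ≤ B_p ‖h'(·) − h(·)/s‖_{L^p}` for all `h ∈ W_0^{1,p}((0,1), ℝ^d)`. -/
theorem stmt_3 (d : ℕ) (hd : 1 ≤ d) (p q : ℝ) (hp : 1 < p) (hq : 1 < q)
    (hpq : 1 / p + 1 / q = 1)
    (h h' : ℝ → EuclideanSpace ℝ (Fin d))
    (hderiv : ∀ s ∈ Set.Icc (0:ℝ) 1, HasDerivAt h (h' s) s)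
    (h0 : h 0 = 0) (h1 : h 1 = 0)
    (hint : IntervalIntegrable (fun s => ‖h' s‖ ^ p) volume 0 1)
    (hint' : IntervalIntegrable (fun s => ‖h' s - s⁻¹ • h s‖ ^ p) volume 0 1) :
    (∫ s in (0:ℝ)..1, ‖h' s‖ ^ p) ^ (1 / p) ≤
      (q / (q - 1) + 1) * (∫ s in (0:ℝ)..1, ‖h' s - s⁻¹ • h s‖ ^ p) ^ (1 / p) := by
  have hp0 : (0:ℝ) < p := lt_trans one_pos hp
  have hpne : p ≠ 0 := hp0.ne'
  have hpm1 : (0:ℝ) < p - 1 := sub_pos.2 hp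
  have hconj : p.HolderConjugate q := Real.holderConjugate_iff.2 ⟨hp, by rw [inv_eq_one_div, inv_eq_one_div]; exact hpq⟩
  have hqp : q / (q - 1) = p := (hconj.symm.conjugate_eq).symm
  set g : ℝ → EuclideanSpace ℝ (Fin d) := fun s => h' s - s⁻¹ • h s with hgdef
  set u : ℝ → EuclideanSpace ℝ (Fin d) := fun s => s⁻¹ • h s with hudef
  have hu1 : u 1 = 0 := by simp [hudef, h1]
  have hsum : ∀ s, h' s = g s + u s := fun s => by simp [hgdef, hudef]
  -- derivative of u on (0,1]
  have huderiv : ∀ s ∈ Ioc (0:ℝ) 1, HasDerivAt u (s⁻¹ • g s) s := by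
    intro s hs
    have hs0 : s ≠ 0 := ne_of_gt hs.1
    have hinv : HasDerivAt (fun t : ℝ => t⁻¹) (-(s^2)⁻¹) s := hasDerivAt_inv hs0
    have hh := hderiv s ⟨hs.1.le, hs.2⟩
    have hD := hinv.smul hh
    have : u = fun t => t⁻¹ • h t := hudef
    rw [this]
    refine hD.congr_deriv ?_
    have hsq : (s^2)⁻¹ = s⁻¹ * s⁻¹ := by rw [sq, mul_inv]
    rw [hgdef]
    simp only [smul_sub, smul_smul, hsq]
    module
  have hucont : ContinuousOn u (Ioc 0 1) := fun s hs =>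
    (huderiv s hs).continuousAt.continuousWithinAt
  -- measurability
  have hmeas_h' : AEStronglyMeasurable h' (volume.restrict (Ioc (0:ℝ) 1)) := by
    have hd' : StronglyMeasurable (deriv h) := (measurable_deriv h).stronglyMeasurable
    refine hd'.aestronglyMeasurable.congr ?_
    refine (ae_restrict_iff' measurableSet_Ioc).2 (ae_of_all _ fun s hs => ?_)
    exact (hderiv s ⟨hs.1.le, hs.2⟩).deriv
  have hmeas_u : AEStronglyMeasurable u (volume.restrict (Ioc (0:ℝ) 1)) :=
    hucont.aestronglyMeasurable measurableSet_Ioc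
  have hmeas_g : AEStronglyMeasurable g (volume.restrict (Ioc (0:ℝ) 1)) := by
    rw [hgdef]
    exact hmeas_h'.sub hmeas_u
  have hint_g : IntegrableOn (fun s => ‖g s‖ ^ p) (Ioc (0:ℝ) 1) := hint'.1
  have hint_h' : IntegrableOn (fun s => ‖h' s‖ ^ p) (Ioc (0:ℝ) 1) := hint.1
  set G := ∫ s in Ioc (0:ℝ) 1, ‖g s‖ ^ p with hGdef
  have hGnn : 0 ≤ G :=
    setIntegral_nonneg measurableSet_Ioc fun s _ => Real.rpow_nonneg (norm_nonneg _) _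
  have hmem_g : MemLp g (ENNReal.ofReal p) (volume.restrict (Ioc (0:ℝ) 1)) :=
    aux_memLp hp0 hmeas_g hint_g
  have hmem_h' : MemLp h' (ENNReal.ofReal p) (volume.restrict (Ioc (0:ℝ) 1)) :=
    aux_memLp hp0 hmeas_h' hint_h'
  -- the key Hardy-type estimate on (ε, 1]
  have key : ∀ ε : ℝ, 0 < ε → ε ≤ 1 →
      IntegrableOn (fun s => ‖u s‖ ^ p) (Ioc ε 1) ∧
      ∫ s in Ioc ε 1, ‖u s‖ ^ p ≤ p ^ p * G := by
    intro ε hε hε1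
    have hIccsub : Icc ε 1 ⊆ Ioc 0 1 := fun x hx => ⟨lt_of_lt_of_le hε hx.1, hx.2⟩
    have hIocsub : Ioc ε 1 ⊆ Ioc 0 1 := fun x hx => ⟨hε.trans hx.1, hx.2⟩
    set r : ℝ → ℝ := fun s => ‖u s‖ ^ p with hrdef
    have hucont' : ContinuousOn u (Icc ε 1) := hucont.mono hIccsub
    have hrcont : ContinuousOn r (Icc ε 1) :=
      (hucont'.norm).rpow_const fun x _ => Or.inr hp0.le
    have hIr : IntegrableOn r (Icc ε 1) := hrcont.integrableOn_Icc
    refine ⟨hIr.mono_set Ioc_subset_Icc_self, ?_⟩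
    obtain ⟨M, hM⟩ : ∃ M, ∀ s ∈ Icc ε 1, ‖u s‖ ^ (p - 1) ≤ M := by
      obtain ⟨M, hM⟩ := isCompact_Icc.exists_bound_of_continuousOn
        ((hucont'.norm).rpow_const fun x _ => Or.inr hpm1.le)
      exact ⟨M, fun s hs => (le_abs_self _).trans (by simpa [Real.norm_eq_abs] using hM s hs)⟩
    have hMnn : 0 ≤ M := le_trans (Real.rpow_nonneg (norm_nonneg _) _) (hM ε ⟨le_rfl, hε1⟩)
    have hres : volume.restrict (Icc ε 1) ≤ volume.restrict (Ioc (0:ℝ) 1) :=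
      Measure.restrict_mono hIccsub le_rfl
    have hmeas_gε : AEStronglyMeasurable g (volume.restrict (Icc ε 1)) :=
      hmeas_g.mono_measure hres
    have hgp : IntegrableOn (fun s => ‖g s‖ ^ p) (Icc ε 1) := hint_g.mono_set hIccsub
    have hgL1 : IntegrableOn (fun s => ‖g s‖) (Icc ε 1) := by
      refine Integrable.mono' (g := fun s => 1 + ‖g s‖ ^ p) ?_
        hmeas_gε.norm (ae_of_all _ fun s => ?_)
      · exact ((integrableOn_const (C := (1:ℝ)) measure_Icc_lt_top.ne)).add hgp
      · rw [norm_norm]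
        exact aux_le_one_add (norm_nonneg _) hp.le
    -- derivative of r with bound
    have hr : ∀ s ∈ Icc ε 1, HasDerivAt r (deriv r s) s ∧
        |deriv r s| ≤ p * (‖u s‖ ^ (p - 1) * (s⁻¹ * ‖g s‖)) := by
      intro s hs
      have hs0 : (0:ℝ) < s := lt_of_lt_of_le hε hs.1
      have hFr : HasDerivAt r (((p * ‖u s‖ ^ (p - 2)) • innerSL ℝ (u s)) (s⁻¹ • g s)) s :=
        (hasFDerivAt_norm_rpow (u s) hp).comp_hasDerivAt s (huderiv s (hIccsub hs))
      refine ⟨hFr.differentiableAt.hasDerivAt, ?_⟩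
      rw [hFr.deriv]
      have hnorm : ‖s⁻¹ • g s‖ = s⁻¹ * ‖g s‖ := by
        rw [norm_smul, Real.norm_eq_abs, abs_of_pos (inv_pos.2 hs0)]
      have hinner : |(inner ℝ (u s) (s⁻¹ • g s) : ℝ)| ≤ ‖u s‖ * (s⁻¹ * ‖g s‖) :=
        (abs_real_inner_le_norm _ _).trans_eq (by rw [hnorm])
      have happ : ((p * ‖u s‖ ^ (p - 2)) • innerSL ℝ (u s)) (s⁻¹ • g s)
          = (p * ‖u s‖ ^ (p - 2)) * (inner ℝ (u s) (s⁻¹ • g s) : ℝ) := by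
        rw [ContinuousLinearMap.smul_apply, innerSL_apply_apply, smul_eq_mul]
      have hepow : ‖u s‖ ^ (p - 2) * ‖u s‖ = ‖u s‖ ^ (p - 1) := by
        have hne : p - 2 + 1 ≠ 0 := by intro hc; exact hpm1.ne' (by linarith)
        have := (Real.rpow_add_one' (y := p - 2) (norm_nonneg (u s)) hne).symm
        rw [show p - 2 + 1 = p - 1 by ring] at this
        exact this
      rw [happ, abs_mul, abs_of_nonneg (show (0:ℝ) ≤ p * ‖u s‖ ^ (p - 2) by positivity)]
      calc p * ‖u s‖ ^ (p - 2) * |(inner ℝ (u s) (s⁻¹ • g s) : ℝ)|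
          ≤ p * ‖u s‖ ^ (p - 2) * (‖u s‖ * (s⁻¹ * ‖g s‖)) :=
            mul_le_mul_of_nonneg_left hinner (by positivity)
        _ = p * ((‖u s‖ ^ (p - 2) * ‖u s‖) * (s⁻¹ * ‖g s‖)) := by ring
        _ = p * (‖u s‖ ^ (p - 1) * (s⁻¹ * ‖g s‖)) := by rw [hepow]
    set D : ℝ → ℝ := fun s => r s + s * deriv r s with hDdef
    have hΦ : ∀ s ∈ uIcc ε 1, HasDerivAt (fun t => t * r t) (D s) s := by
      intro s hs
      rw [uIcc_of_le hε1] at hs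
      have := (hasDerivAt_id s).mul (hr s hs).1
      refine this.congr_deriv ?_
      simp [hDdef]
    have hmeas_sdr : AEStronglyMeasurable (fun s => s * deriv r s)
        (volume.restrict (Icc ε 1)) :=
      (measurable_id.mul (measurable_deriv r)).aestronglyMeasurable
    have hbound_int : IntegrableOn (fun s => p * M * ‖g s‖) (Icc ε 1) := hgL1.const_mul _
    have hptw1 : ∀ s ∈ Icc ε 1, |s * deriv r s| ≤ p * (‖u s‖ ^ (p - 1) * ‖g s‖) := by
      intro s hs
      have hs0 : (0:ℝ) < s := lt_of_lt_of_le hε hs.1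
      have hb := (hr s hs).2
      rw [abs_mul, abs_of_pos hs0]
      calc s * |deriv r s| ≤ s * (p * (‖u s‖ ^ (p - 1) * (s⁻¹ * ‖g s‖))) :=
            mul_le_mul_of_nonneg_left hb hs0.le
        _ = (s * s⁻¹) * (p * (‖u s‖ ^ (p - 1) * ‖g s‖)) := by ring
        _ = p * (‖u s‖ ^ (p - 1) * ‖g s‖) := by rw [mul_inv_cancel₀ hs0.ne']; ring
    have hptw2 : ∀ s ∈ Icc ε 1, p * (‖u s‖ ^ (p - 1) * ‖g s‖) ≤ p * M * ‖g s‖ := by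
      intro s hs
      have := mul_le_mul_of_nonneg_right (hM s hs) (norm_nonneg (g s))
      calc p * (‖u s‖ ^ (p - 1) * ‖g s‖) ≤ p * (M * ‖g s‖) :=
            mul_le_mul_of_nonneg_left this hp0.le
        _ = p * M * ‖g s‖ := by ring
    have hsdr : IntegrableOn (fun s => s * deriv r s) (Icc ε 1) := by
      refine Integrable.mono' hbound_int hmeas_sdr ?_
      refine (ae_restrict_iff' measurableSet_Icc).2 (ae_of_all _ fun s hs => ?_)
      rw [Real.norm_eq_abs]
      exact (hptw1 s hs).trans (hptw2 s hs)
    have hmeas_ur : AEStronglyMeasurable (fun s => ‖u s‖ ^ (p - 1))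
        (volume.restrict (Icc ε 1)) :=
      ((hucont'.norm).rpow_const fun x _ => Or.inr hpm1.le).aestronglyMeasurable
        measurableSet_Icc
    have hprod : IntegrableOn (fun s => p * (‖u s‖ ^ (p - 1) * ‖g s‖)) (Icc ε 1) := by
      refine Integrable.mono' hbound_int ((hmeas_ur.mul hmeas_gε.norm).const_mul p) ?_
      refine (ae_restrict_iff' measurableSet_Icc).2 (ae_of_all _ fun s hs => ?_)
      rw [Real.norm_of_nonneg (by positivity)]
      exact hptw2 s hs
    have hIrint : IntervalIntegrable r volume ε 1 := by
      rw [intervalIntegrable_iff, uIoc_of_le hε1]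
      exact hIr.mono_set Ioc_subset_Icc_self
    have hsdrint : IntervalIntegrable (fun s => s * deriv r s) volume ε 1 := by
      rw [intervalIntegrable_iff, uIoc_of_le hε1]
      exact hsdr.mono_set Ioc_subset_Icc_self
    have hprodint : IntervalIntegrable (fun s => p * (‖u s‖ ^ (p - 1) * ‖g s‖)) volume ε 1 := by
      rw [intervalIntegrable_iff, uIoc_of_le hε1]
      exact hprod.mono_set Ioc_subset_Icc_self
    have hDint : IntervalIntegrable D volume ε 1 := by
      rw [intervalIntegrable_iff, uIoc_of_le hε1]
      have hDon : IntegrableOn D (Icc ε 1) := hIr.add hsdr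
      exact hDon.mono_set Ioc_subset_Icc_self
    have hval : ∫ s in ε..1, D s = 1 * r 1 - ε * r ε :=
      intervalIntegral.integral_eq_sub_of_hasDerivAt hΦ hDint
    have hr1 : r 1 = 0 := by rw [hrdef]; simp [hu1, Real.zero_rpow hpne]
    have hrε : 0 ≤ r ε := Real.rpow_nonneg (norm_nonneg _) _
    have hsplit : ∫ s in ε..1, D s = (∫ s in ε..1, r s) + ∫ s in ε..1, s * deriv r s := by
      rw [hDdef]
      exact intervalIntegral.integral_add hIrint hsdrint
    have hneg : (∫ s in ε..1, r s) + (∫ s in ε..1, s * deriv r s) ≤ 0 := by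
      rw [← hsplit, hval, hr1]
      nlinarith [mul_nonneg hε.le hrε]
    have habs : -(∫ s in ε..1, s * deriv r s) ≤
        ∫ s in ε..1, p * (‖u s‖ ^ (p - 1) * ‖g s‖) := by
      calc -(∫ s in ε..1, s * deriv r s) ≤ |∫ s in ε..1, s * deriv r s| := neg_le_abs _
        _ ≤ ∫ s in ε..1, |s * deriv r s| :=
            intervalIntegral.abs_integral_le_integral_abs hε1
        _ ≤ ∫ s in ε..1, p * (‖u s‖ ^ (p - 1) * ‖g s‖) :=
            intervalIntegral.integral_mono_on hε1 hsdrint.abs hprodint hptw1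
    have step1 : ∫ s in ε..1, r s ≤ ∫ s in ε..1, p * (‖u s‖ ^ (p - 1) * ‖g s‖) := by
      linarith
    -- Hölder
    have hmem_uε : MemLp u (ENNReal.ofReal p) (volume.restrict (Ioc ε 1)) :=
      aux_memLp hp0 (hmeas_u.mono_measure (Measure.restrict_mono hIocsub le_rfl))
        (hIr.mono_set Ioc_subset_Icc_self)
    have hmem_gε' : MemLp g (ENNReal.ofReal p) (volume.restrict (Ioc ε 1)) :=
      hmem_g.mono_measure (Measure.restrict_mono hIocsub le_rfl)
    have hhold := aux_holder hconj hmem_uε hmem_gε'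
    set Aε := ∫ s in Ioc ε 1, ‖u s‖ ^ p with hAedef
    have hAεnn : 0 ≤ Aε :=
      setIntegral_nonneg measurableSet_Ioc fun s _ => Real.rpow_nonneg (norm_nonneg _) _
    have hGεnn : 0 ≤ ∫ s in Ioc ε 1, ‖g s‖ ^ p :=
      setIntegral_nonneg measurableSet_Ioc fun s _ => Real.rpow_nonneg (norm_nonneg _) _
    have hGε : (∫ s in Ioc ε 1, ‖g s‖ ^ p) ≤ G := by
      rw [hGdef]
      refine setIntegral_mono_set hint_g ?_ (HasSubset.Subset.eventuallyLE hIocsub)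
      exact ae_of_all _ fun s => Real.rpow_nonneg (norm_nonneg _) _
    have hchain : Aε ≤ Aε ^ (1 / q) * (p * G ^ (1 / p)) := by
      have e1 : Aε = ∫ s in ε..1, r s := by
        rw [intervalIntegral.integral_of_le hε1]
      have e2 : ∫ s in ε..1, p * (‖u s‖ ^ (p - 1) * ‖g s‖)
          = p * ∫ s in Ioc ε 1, ‖u s‖ ^ (p - 1) * ‖g s‖ := by
        rw [intervalIntegral.integral_const_mul, intervalIntegral.integral_of_le hε1]
      have h4 : (∫ s in Ioc ε 1, ‖g s‖ ^ p) ^ (1 / p) ≤ G ^ (1 / p) :=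
        Real.rpow_le_rpow hGεnn hGε (by positivity)
      calc Aε = ∫ s in ε..1, r s := e1
        _ ≤ ∫ s in ε..1, p * (‖u s‖ ^ (p - 1) * ‖g s‖) := step1
        _ = p * ∫ s in Ioc ε 1, ‖u s‖ ^ (p - 1) * ‖g s‖ := e2
        _ ≤ p * (Aε ^ (1 / q) * (∫ s in Ioc ε 1, ‖g s‖ ^ p) ^ (1 / p)) :=
            mul_le_mul_of_nonneg_left hhold hp0.le
        _ ≤ p * (Aε ^ (1 / q) * G ^ (1 / p)) := by
            refine mul_le_mul_of_nonneg_left ?_ hp0.le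
            exact mul_le_mul_of_nonneg_left h4 (Real.rpow_nonneg hAεnn _)
        _ = Aε ^ (1 / q) * (p * G ^ (1 / p)) := by ring
    have hcan : Aε ^ (1 / p) ≤ p * G ^ (1 / p) :=
      aux_cancel hconj hAεnn (mul_nonneg hp0.le (Real.rpow_nonneg hGnn _)) hchain
    have h5 := Real.rpow_le_rpow (Real.rpow_nonneg hAεnn _) hcan hp0.le
    have e5 : (Aε ^ (1 / p)) ^ p = Aε := by
      rw [← Real.rpow_mul hAεnn, one_div_mul_cancel hpne, Real.rpow_one]
    have e6 : (p * G ^ (1 / p)) ^ p = p ^ p * G := by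
      rw [Real.mul_rpow hp0.le (Real.rpow_nonneg hGnn _), ← Real.rpow_mul hGnn,
        one_div_mul_cancel hpne, Real.rpow_one]
    rw [e5, e6] at h5
    exact h5
  -- pass to the limit ε → 0
  set a : ℕ → ℝ := fun n => 1 / (n + 1) with hadef
  have ha_pos : ∀ n, 0 < a n := fun n => by positivity
  have ha_le : ∀ n, a n ≤ 1 := fun n => by
    rw [hadef]
    rw [div_le_one (by positivity)]
    simp
  have ha0 : Tendsto a atTop (𝓝 0) := tendsto_one_div_add_atTop_nhds_zero_nat
  have hnorm_eq : (fun x => ‖‖u x‖ ^ p‖) = fun x => ‖u x‖ ^ p := funext fun x => by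
    rw [Real.norm_rpow_of_nonneg (norm_nonneg _), norm_norm]
  have hIu : IntegrableOn (fun s => ‖u s‖ ^ p) (Ioc (0:ℝ) 1) := by
    refine integrableOn_Ioc_of_intervalIntegral_norm_bounded_left
      (I := p ^ p * G) (a := a) (l := atTop)
      (fun n => (key (a n) (ha_pos n) (ha_le n)).1) ha0 ?_
    refine Eventually.of_forall fun n => ?_
    rw [hnorm_eq]
    exact (key (a n) (ha_pos n) (ha_le n)).2
  have hun : (⋃ n, Ioc (a n) 1) = Ioc (0:ℝ) 1 := by
    ext x
    simp only [mem_iUnion, mem_Ioc]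
    constructor
    · rintro ⟨n, h1n, h2n⟩
      exact ⟨(ha_pos n).trans h1n, h2n⟩
    · rintro ⟨hx0, hx1⟩
      obtain ⟨n, hn⟩ := exists_nat_one_div_lt hx0
      exact ⟨n, hn, hx1⟩
  have hmono : Monotone fun n => Ioc (a n) 1 := by
    intro m n hmn
    apply Ioc_subset_Ioc_left
    rw [hadef]
    apply one_div_le_one_div_of_le (by positivity)
    exact_mod_cast add_le_add_left (Nat.cast_le.2 hmn) 1
  have hIu_le : ∫ s in Ioc (0:ℝ) 1, ‖u s‖ ^ p ≤ p ^ p * G := by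
    have ht := tendsto_setIntegral_of_monotone (fun n => measurableSet_Ioc) hmono
      (by rw [hun]; exact hIu)
    rw [hun] at ht
    exact le_of_tendsto ht (Eventually.of_forall fun n => (key (a n) (ha_pos n) (ha_le n)).2)
  -- final Minkowski-via-Hölder step
  set A := ∫ s in Ioc (0:ℝ) 1, ‖h' s‖ ^ p with hAdef
  set U := ∫ s in Ioc (0:ℝ) 1, ‖u s‖ ^ p with hUdef
  have hAnn : 0 ≤ A :=
    setIntegral_nonneg measurableSet_Ioc fun s _ => Real.rpow_nonneg (norm_nonneg _) _
  have hUnn : 0 ≤ U :=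
    setIntegral_nonneg measurableSet_Ioc fun s _ => Real.rpow_nonneg (norm_nonneg _) _
  have hmem_u : MemLp u (ENNReal.ofReal p) (volume.restrict (Ioc (0:ℝ) 1)) :=
    aux_memLp hp0 hmeas_u hIu
  have hH1 := aux_holder hconj hmem_h' hmem_g
  have hH2 := aux_holder hconj hmem_h' hmem_u
  have hmemq : MemLp (fun s => ‖h' s‖ ^ (p - 1)) (ENNReal.ofReal q)
      (volume.restrict (Ioc (0:ℝ) 1)) := aux_memLp_rpow hconj hmem_h'
  have hPI1 : Integrable (fun s => ‖h' s‖ ^ (p - 1) * ‖g s‖)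
      (volume.restrict (Ioc (0:ℝ) 1)) := aux_int_mul hconj hmemq hmem_g.norm
  have hPI2 : Integrable (fun s => ‖h' s‖ ^ (p - 1) * ‖u s‖)
      (volume.restrict (Ioc (0:ℝ) 1)) := aux_int_mul hconj hmemq hmem_u.norm
  have hA_eq : A = ∫ s in Ioc (0:ℝ) 1, ‖h' s‖ ^ (p - 1) * ‖h' s‖ := by
    rw [hAdef]
    exact setIntegral_congr_fun measurableSet_Ioc fun s _ =>
      aux_rpow_split (norm_nonneg _) hpne
  have hstep : A ≤ (∫ s in Ioc (0:ℝ) 1, ‖h' s‖ ^ (p - 1) * ‖g s‖) +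
      ∫ s in Ioc (0:ℝ) 1, ‖h' s‖ ^ (p - 1) * ‖u s‖ := by
    rw [hA_eq, ← integral_add hPI1 hPI2]
    refine integral_mono_of_nonneg (Eventually.of_forall fun s => by positivity)
      (hPI1.add hPI2) (Eventually.of_forall fun s => ?_)
    have hle : ‖h' s‖ ≤ ‖g s‖ + ‖u s‖ := by
      rw [hsum s]; exact norm_add_le _ _
    have := mul_le_mul_of_nonneg_left hle
      (Real.rpow_nonneg (norm_nonneg (h' s)) (p - 1))
    simpa [mul_add] using this
  have hUle : U ^ (1 / p) ≤ p * G ^ (1 / p) := by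
    have h1 : U ^ (1 / p) ≤ (p ^ p * G) ^ (1 / p) :=
      Real.rpow_le_rpow hUnn hIu_le (by positivity)
    have h2 : (p ^ p * G) ^ (1 / p) = p * G ^ (1 / p) := by
      rw [Real.mul_rpow (by positivity) hGnn, ← Real.rpow_mul hp0.le,
        mul_one_div, div_self hpne, Real.rpow_one]
    rw [h2] at h1
    exact h1
  have hcomb : A ≤ A ^ (1 / q) * ((1 + p) * G ^ (1 / p)) := by
    have hApow : 0 ≤ A ^ (1 / q) := Real.rpow_nonneg hAnn _
    calc A ≤ (∫ s in Ioc (0:ℝ) 1, ‖h' s‖ ^ (p - 1) * ‖g s‖) +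
        ∫ s in Ioc (0:ℝ) 1, ‖h' s‖ ^ (p - 1) * ‖u s‖ := hstep
      _ ≤ A ^ (1 / q) * G ^ (1 / p) + A ^ (1 / q) * U ^ (1 / p) := add_le_add hH1 hH2
      _ ≤ A ^ (1 / q) * G ^ (1 / p) + A ^ (1 / q) * (p * G ^ (1 / p)) :=
          add_le_add_right (mul_le_mul_of_nonneg_left hUle hApow) _
      _ = A ^ (1 / q) * ((1 + p) * G ^ (1 / p)) := by ring
  have hfinal : A ^ (1 / p) ≤ (1 + p) * G ^ (1 / p) :=
    aux_cancel hconj hAnn (by positivity) hcomb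
  -- rewrite the goal
  rw [intervalIntegral.integral_of_le zero_le_one, intervalIntegral.integral_of_le zero_le_one]
  rw [hqp]
  calc (∫ s in Ioc (0:ℝ) 1, ‖h' s‖ ^ p) ^ (1 / p) = A ^ (1 / p) := by rw [hAdef]
    _ ≤ (1 + p) * G ^ (1 / p) := hfinal
    _ = (p + 1) * (∫ s in Ioc (0:ℝ) 1, ‖g s‖ ^ p) ^ (1 / p) := by rw [hGdef]; ring
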